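/- Let n ≥ 2 and let 𝒢ₙ² be the set of Feynman graphs on n vertices, each vertex having two legs labeled 1 and 2, where legs are paired into links such that every link joins legs of two distinct vertices and every leg belongs to exactly one link. Let π ∈ 𝒫(n) be a partition of {1,…,n} all of whose blocks have size ≥ 2, say π = {B₁,…,B_k}. Then the number of graphs G ∈ 𝒢ₙ² whose connected components have vertex sets exactly B₁,…,B_k equals ∏_{j=1}^k 2^{#B_j − 1} (#B_j − 1)!. -/

import Mathlib

open Finset


namespace Stmt12Aux

/-- flip a leg label -/
def flip2 : Fin 2 → Fin 2 := fun j => j + 1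

lemma flip2_flip2 (j : Fin 2) : flip2 (flip2 j) = j := by revert j; decide

lemma flip2_ne (j : Fin 2) : flip2 j ≠ j := by revert j; decide

lemma eq_flip2_of_ne {a b : Fin 2} (h : a ≠ b) : a = flip2 b := by revert a b; decide

variable {V W : Type*}

/-- adjacency relation of vertices induced by a leg-matching -/
def Rel (G : V × Fin 2 → V × Fin 2) (a b : V) : Prop := ∃ p q : Fin 2, G (a, p) = (b, q)

lemma rel_symm {G : V × Fin 2 → V × Fin 2} (hG : Function.Involutive G) :
    Symmetric (Rel G) := by
  rintro a b ⟨p, q, h⟩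
  exact ⟨q, p, by rw [← h, hG]⟩

/-- connected good matchings on `V` -/
def ConnSet (V : Type*) :=
  {G : V × Fin 2 → V × Fin 2 // Function.Involutive G ∧ (∀ l, (G l).1 ≠ l.1) ∧
    ∀ i j : V, Relation.ReflTransGen (Rel G) i j}

/-! ### Fin arithmetic helpers -/

lemma last_add_one (r : ℕ) : Fin.last r + 1 = 0 := by
  simp [Fin.ext_iff, Fin.add_def, Fin.val_one']

lemma sub_one_ne_last {r : ℕ} {k : Fin (r+1)} (h : k ≠ 0) : k - 1 ≠ Fin.last r := by
  intro c
  apply h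
  have : k - 1 + 1 = Fin.last r + 1 := by rw [c]
  rw [sub_add_cancel, last_add_one] at this
  exact this

lemma add_one_ne_zero {r : ℕ} {k : Fin (r+1)} (h : k ≠ Fin.last r) : k + 1 ≠ 0 := by
  intro c
  exact h (add_right_cancel (c.trans (last_add_one r).symm))

lemma sub_one_ne_self {r : ℕ} {k : Fin (r+1)} (h : k ≠ 0) : k - 1 ≠ k := by
  intro c
  have hk : k.val ≠ 0 := fun hh => h (Fin.ext hh)
  have := congrArg Fin.val c
  rw [Fin.coe_sub_one, if_neg h] at this
  omega

lemma add_one_ne_self {r : ℕ} {k : Fin (r+1)} (h : k ≠ Fin.last r) : k + 1 ≠ k := by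
  intro c
  have := congrArg Fin.val c
  rw [Fin.val_add_one_of_lt (lt_of_le_of_ne (Fin.le_last k) h)] at this
  omega

lemma sub_one_val {r : ℕ} {k : Fin (r+1)} (h : k ≠ 0) : (k - 1).val = k.val - 1 := by
  rw [Fin.coe_sub_one, if_neg h]

lemma add_one_val {r : ℕ} {k : Fin (r+1)} (h : k ≠ Fin.last r) : (k + 1).val = k.val + 1 :=
  Fin.val_add_one_of_lt (lt_of_le_of_ne (Fin.le_last k) h)

/-! ### The encoding map -/

section Phi

variable (r : ℕ)

/-- data encoding a connected matching on `Fin (r+2)` -/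
abbrev Data (r : ℕ) :=
  (Fin (r+1) ≃ {v : Fin (r+2) // v ≠ 0}) × (Fin (r+1) → Fin 2)

variable {r}

/-- the leg by which the walk enters the `k`-th vertex -/
def inleg (d : Data r) (k : Fin (r+1)) : Fin (r+2) × Fin 2 := ((d.1 k : Fin (r+2)), d.2 k)

/-- the leg by which the walk leaves the `k`-th vertex -/
def outleg (d : Data r) (k : Fin (r+1)) : Fin (r+2) × Fin 2 :=
  ((d.1 k : Fin (r+2)), flip2 (d.2 k))

/-- the matching encoded by `d` -/
def phi (d : Data r) : Fin (r+2) × Fin 2 → Fin (r+2) × Fin 2 := fun l =>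
  if h : l.1 = 0 then
    if l.2 = 0 then inleg d 0 else outleg d (Fin.last r)
  else
    if l.2 = d.2 (d.1.symm ⟨l.1, h⟩) then
      if d.1.symm ⟨l.1, h⟩ = 0 then ((0 : Fin (r+2)), (0 : Fin 2))
      else outleg d (d.1.symm ⟨l.1, h⟩ - 1)
    else
      if d.1.symm ⟨l.1, h⟩ = Fin.last r then ((0 : Fin (r+2)), (1 : Fin 2))
      else inleg d (d.1.symm ⟨l.1, h⟩ + 1)

lemma phi_zero0 (d : Data r) : phi d (0, 0) = inleg d 0 := by simp [phi]

lemma phi_zero1 (d : Data r) : phi d (0, 1) = outleg d (Fin.last r) := by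
  rw [phi]
  norm_num

lemma phi_inleg (d : Data r) (k : Fin (r+1)) :
    phi d (inleg d k) =
      if k = 0 then ((0 : Fin (r+2)), (0 : Fin 2)) else outleg d (k - 1) := by
  have h1 : ((d.1 k : Fin (r+2)), d.2 k).1 ≠ 0 := (d.1 k).2
  rw [inleg, phi, dif_neg h1]
  have h2 : (⟨(d.1 k : Fin (r+2)), h1⟩ : {v : Fin (r+2) // v ≠ 0}) = d.1 k := rfl
  rw [h2, Equiv.symm_apply_apply, if_pos rfl]

lemma phi_outleg (d : Data r) (k : Fin (r+1)) :
    phi d (outleg d k) =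
      if k = Fin.last r then ((0 : Fin (r+2)), (1 : Fin 2)) else inleg d (k + 1) := by
  have h1 : ((d.1 k : Fin (r+2)), flip2 (d.2 k)).1 ≠ 0 := (d.1 k).2
  rw [outleg, phi, dif_neg h1]
  have h2 : (⟨(d.1 k : Fin (r+2)), h1⟩ : {v : Fin (r+2) // v ≠ 0}) = d.1 k := rfl
  rw [h2, Equiv.symm_apply_apply, if_neg (flip2_ne _)]

end Phi


section PhiProps

variable {r : ℕ}

/-- every leg is of one of four kinds -/
lemma leg_cases (d : Data r) (l : Fin (r+2) × Fin 2) :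
    l = ((0:Fin (r+2)), (0:Fin 2)) ∨ l = ((0:Fin (r+2)), (1:Fin 2)) ∨
      (∃ k, l = inleg d k) ∨ (∃ k, l = outleg d k) := by
  obtain ⟨v, j⟩ := l
  by_cases hv : v = 0
  · subst hv
    by_cases hj : j = 0
    · exact Or.inl (by rw [hj])
    · refine Or.inr (Or.inl ?_)
      have : j = 1 := by omega
      rw [this]
  · set k := d.1.symm ⟨v, hv⟩ with hk
    have hv' : v = (d.1 k : Fin (r+2)) := by rw [hk, Equiv.apply_symm_apply]
    by_cases hj : j = d.2 k
    · exact Or.inr (Or.inr (Or.inl ⟨k, by rw [inleg, ← hv', hj]⟩))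
    · refine Or.inr (Or.inr (Or.inr ⟨k, ?_⟩))
      rw [outleg, ← hv', eq_flip2_of_ne hj]

lemma phi_involutive (d : Data r) : Function.Involutive (phi d) := by
  intro l
  rcases leg_cases d l with h | h | ⟨k, h⟩ | ⟨k, h⟩ <;> subst h
  · rw [phi_zero0, phi_inleg, if_pos rfl]
  · rw [phi_zero1, phi_outleg, if_pos rfl]
  · rw [phi_inleg]
    by_cases hk : k = 0
    · rw [if_pos hk, phi_zero0, hk]
    · rw [if_neg hk, phi_outleg, if_neg (sub_one_ne_last hk), sub_add_cancel]
  · rw [phi_outleg]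
    by_cases hk : k = Fin.last r
    · rw [if_pos hk, phi_zero1, hk]
    · rw [if_neg hk, phi_inleg, if_neg (add_one_ne_zero hk), add_sub_cancel_right]

lemma phi_ne (d : Data r) : ∀ l, (phi d l).1 ≠ l.1 := by
  intro l
  rcases leg_cases d l with h | h | ⟨k, h⟩ | ⟨k, h⟩ <;> subst h
  · rw [phi_zero0]; exact (d.1 0).2
  · rw [phi_zero1]; exact (d.1 (Fin.last r)).2
  · rw [phi_inleg]
    by_cases hk : k = 0
    · rw [if_pos hk]
      exact fun c => (d.1 k).2 c.symm
    · rw [if_neg hk]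
      intro c
      have : d.1 (k - 1) = d.1 k := Subtype.ext c
      exact sub_one_ne_self hk (d.1.injective this)
  · rw [phi_outleg]
    by_cases hk : k = Fin.last r
    · rw [if_pos hk]
      exact fun c => (d.1 k).2 c.symm
    · rw [if_neg hk]
      intro c
      have : d.1 (k + 1) = d.1 k := Subtype.ext c
      exact add_one_ne_self hk (d.1.injective this)

lemma phi_conn_zero (d : Data r) (k : Fin (r+1)) :
    Relation.ReflTransGen (Rel (phi d)) 0 (d.1 k : Fin (r+2)) := by
  induction k using Fin.induction with
  | zero =>
    exact Relation.ReflTransGen.single ⟨0, d.2 0, phi_zero0 d⟩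
  | succ k ih =>
    refine ih.tail ?_
    have hne : k.castSucc ≠ Fin.last r := (Fin.castSucc_lt_last k).ne
    have hsucc : k.castSucc + 1 = k.succ := by
      apply Fin.ext
      rw [add_one_val hne, Fin.coe_castSucc, Fin.val_succ]
    refine ⟨flip2 (d.2 k.castSucc), d.2 k.succ, ?_⟩
    have := phi_outleg d k.castSucc
    rw [if_neg hne, hsucc] at this
    exact this

lemma phi_conn (d : Data r) (i j : Fin (r+2)) :
    Relation.ReflTransGen (Rel (phi d)) i j := by
  have h0 : ∀ v : Fin (r+2), Relation.ReflTransGen (Rel (phi d)) 0 v := by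
    intro v
    by_cases hv : v = 0
    · rw [hv]
    · have : v = (d.1 (d.1.symm ⟨v, hv⟩) : Fin (r+2)) := by rw [Equiv.apply_symm_apply]
      rw [this]
      exact phi_conn_zero d _
  have hsymm : ∀ {a b : Fin (r+2)}, Relation.ReflTransGen (Rel (phi d)) a b → Relation.ReflTransGen (Rel (phi d)) b a := fun h =>
    (haveI : Std.Symm (Rel (phi d)) := ⟨fun a b h => rel_symm (phi_involutive d) h⟩; Std.Symm.symm (r := Relation.ReflTransGen (Rel (phi d))) _ _ h)
  exact (hsymm (h0 i)).trans (h0 j)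



lemma castSucc_add_one {r : ℕ} (k : Fin r) : k.castSucc + 1 = k.succ := by
  apply Fin.ext
  rw [add_one_val (Fin.castSucc_lt_last k).ne, Fin.coe_castSucc, Fin.val_succ]

lemma phi_injective {r : ℕ} : Function.Injective (phi (r := r)) := by
  intro d d' hphi
  have key : ∀ k : Fin (r+1), (d.1 k : Fin (r+2)) = (d'.1 k : Fin (r+2)) ∧ d.2 k = d'.2 k := by
    intro k
    induction k using Fin.induction with
    | zero =>
      have h0 : inleg d 0 = inleg d' 0 := by
        rw [← phi_zero0, ← phi_zero0, hphi]
      exact ⟨congrArg Prod.fst h0, congrArg Prod.snd h0⟩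
    | succ k ih =>
      have hle : outleg d k.castSucc = outleg d' k.castSucc := by
        rw [outleg, outleg, ih.1, ih.2]
      have hne : k.castSucc ≠ Fin.last r := (Fin.castSucc_lt_last k).ne
      have h1 : inleg d k.succ = inleg d' k.succ := by
        have e1 := phi_outleg d k.castSucc
        have e2 := phi_outleg d' k.castSucc
        rw [if_neg hne, castSucc_add_one] at e1 e2
        rw [← e1, ← e2, hle, hphi]
      exact ⟨congrArg Prod.fst h1, congrArg Prod.snd h1⟩
  have h1 : d.1 = d'.1 := Equiv.ext fun k => Subtype.ext (key k).1
  have h2 : d.2 = d'.2 := funext fun k => (key k).2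
  exact Prod.ext h1 h2


end PhiProps

section Surj

variable {r : ℕ}

/-- the leg-swap permutation -/
def sleg (r : ℕ) : Equiv.Perm (Fin (r+2) × Fin 2) :=
  Function.Involutive.toPerm (fun l => (l.1, flip2 l.2))
    (fun l => by simp [flip2_flip2])

lemma sleg_apply (l : Fin (r+2) × Fin 2) : sleg r l = (l.1, flip2 l.2) := rfl

lemma sleg_sleg (l : Fin (r+2) × Fin 2) : sleg r (sleg r l) = l := by
  simp [sleg_apply, flip2_flip2]

lemma sleg_inv : (sleg r)⁻¹ = sleg r := rfl

variable {G : Fin (r+2) × Fin 2 → Fin (r+2) × Fin 2}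

/-- the walk permutation -/
def sigmaP (hinv : Function.Involutive G) : Equiv.Perm (Fin (r+2) × Fin 2) :=
  (sleg r).trans (Function.Involutive.toPerm G hinv)

lemma sigmaP_apply (hinv : Function.Involutive G) (l) :
    sigmaP hinv l = G (sleg r l) := rfl

/-- the walk -/
def uu (hinv : Function.Involutive G) (k : ℤ) : Fin (r+2) × Fin 2 :=
  (sigmaP hinv ^ k) ((0 : Fin (r+2)), (1 : Fin 2))

variable (hinv : Function.Involutive G)

lemma uu_zero : uu hinv 0 = ((0 : Fin (r+2)), (1 : Fin 2)) := by
  rw [uu, zpow_zero]; rfl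

lemma uu_add (a b : ℤ) : uu hinv (a + b) = (sigmaP hinv ^ a) (uu hinv b) := by
  rw [uu, uu, zpow_add, Equiv.Perm.mul_apply]

lemma conj_sigma : sleg r * sigmaP hinv * sleg r = (sigmaP hinv)⁻¹ := by
  apply Equiv.ext
  intro x
  have h1 : (sleg r * sigmaP hinv * sleg r) x = sleg r (G (sleg r (sleg r x))) := rfl
  rw [h1, sleg_sleg]
  have h2 : (sigmaP hinv)⁻¹ x = sleg r (G x) := by
    apply (sigmaP hinv).injective
    rw [← Equiv.Perm.mul_apply, mul_inv_cancel, Equiv.Perm.one_apply, sigmaP_apply, sleg_sleg, hinv]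
  rw [h2]

lemma conj_sigma_zpow (k : ℤ) :
    sleg r * (sigmaP hinv) ^ k * sleg r = (sigmaP hinv) ^ (-k) := by
  have h0 : (MulAut.conj (sleg r)) (sigmaP hinv ^ k) = ((MulAut.conj (sleg r)) (sigmaP hinv)) ^ k :=
    map_zpow _ _ _
  rw [MulAut.conj_apply, MulAut.conj_apply, sleg_inv, conj_sigma hinv] at h0
  rw [h0, inv_zpow']

lemma s_uu (k : ℤ) : sleg r (uu hinv k) = ((sigmaP hinv) ^ (-k)) ((0:Fin (r+2)), (0:Fin 2)) := by
  rw [← conj_sigma_zpow hinv k]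
  simp only [Equiv.Perm.mul_apply]
  have h0 : sleg r ((0:Fin (r+2)), (0:Fin 2)) = ((0:Fin (r+2)), (1:Fin 2)) := by
    rw [sleg_apply]; rfl
  rw [h0, uu]


lemma G_uu (k : ℤ) : G (uu hinv k) = sleg r (uu hinv (k - 1)) := by
  have h1 : G (uu hinv k) = sigmaP hinv (sleg r (uu hinv k)) := by
    rw [sigmaP_apply, sleg_sleg]
  rw [h1, s_uu, s_uu]
  have : (-(k-1) : ℤ) = 1 + -k := by ring
  rw [this, zpow_add, zpow_one, Equiv.Perm.mul_apply]

lemma G_suu (k : ℤ) : G (sleg r (uu hinv k)) = uu hinv (k + 1) := by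
  have h1 : G (sleg r (uu hinv k)) = sigmaP hinv (uu hinv k) := by
    rw [sigmaP_apply]
  rw [h1, uu, uu, add_comm k 1, zpow_add, zpow_one, Equiv.Perm.mul_apply]

lemma P1 (hne : ∀ l, (G l).1 ≠ l.1) (N : ℤ) :
    uu hinv N ≠ ((0 : Fin (r+2)), (0 : Fin 2)) := by
  intro h
  have key : ∀ k : ℤ, sleg r (uu hinv k) = uu hinv (N - k) := by
    intro k
    rw [s_uu, ← h, uu, uu]
    rw [← Equiv.Perm.mul_apply, ← zpow_add]
    congr 1
    ring
  rcases Int.even_or_odd N with ⟨c, hc⟩ | ⟨c, hc⟩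
  · have h1 := key c
    rw [hc, (by ring : c + c - c = c)] at h1
    have := congrArg Prod.snd h1
    rw [sleg_apply] at this
    exact flip2_ne _ this
  · have h1 := key (c + 1)
    rw [hc, (by ring : 2*c + 1 - (c+1) = c)] at h1
    have h2 : G (uu hinv (c + 1)) = uu hinv (c + 1) := by
      rw [G_uu hinv (c+1), add_sub_cancel_right, ← h1, sleg_sleg]
    exact hne (uu hinv (c+1)) (by rw [h2])

lemma P2 (hne : ∀ l, (G l).1 ≠ l.1) (a b : ℤ)
    (h : (uu hinv a).1 = (uu hinv b).1) : uu hinv a = uu hinv b := by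
  by_cases h2 : (uu hinv a).2 = (uu hinv b).2
  · exact Prod.ext h h2
  · exfalso
    have hb : uu hinv b = sleg r (uu hinv a) := by
      rw [sleg_apply]
      exact Prod.ext h.symm (eq_flip2_of_ne (fun c => h2 c.symm))
    have h3 : uu hinv (a + b) = ((0 : Fin (r+2)), (0 : Fin 2)) := by
      have : (sigmaP hinv ^ a) (uu hinv b) = (sigmaP hinv ^ a) ((sigmaP hinv ^ (-a)) ((0 : Fin (r+2)), (0 : Fin 2))) := by
        rw [hb, s_uu]
      rw [← uu_add, ← Equiv.Perm.mul_apply, ← zpow_add, add_neg_cancel, zpow_zero] at this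
      exact this
    exact P1 hinv hne (a + b) h3

lemma cover (hne : ∀ l, (G l).1 ≠ l.1)
    (hconn : ∀ i j : Fin (r+2), Relation.ReflTransGen (Rel G) i j) (v : Fin (r+2)) :
    ∃ k : ℤ, (uu hinv k).1 = v := by
  have h := hconn 0 v
  induction h with
  | refl => exact ⟨0, by rw [uu_zero]⟩
  | @tail b c hbc hrel ih =>
    obtain ⟨k, hk⟩ := ih
    obtain ⟨p, q, hpq⟩ := hrel
    by_cases hp : p = (uu hinv k).2
    · have hleg : (b, p) = uu hinv k := Prod.ext hk.symm hp
      refine ⟨k - 1, ?_⟩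
      have := G_uu hinv k
      rw [← hleg, hpq] at this
      have := congrArg Prod.fst this
      rw [sleg_apply] at this
      exact this.symm
    · have hleg : (b, p) = sleg r (uu hinv k) := by
        rw [sleg_apply]
        exact Prod.ext hk.symm (eq_flip2_of_ne hp)
      refine ⟨k + 1, ?_⟩
      have := G_suu hinv k
      rw [← hleg, hpq] at this
      exact (congrArg Prod.fst this).symm

lemma period_exists : ∃ T : ℕ, 0 < T ∧ uu hinv T = uu hinv 0 := by
  refine ⟨orderOf (sigmaP hinv), orderOf_pos _, ?_⟩
  rw [uu, uu, zpow_natCast, pow_orderOf_eq_one, zpow_zero]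


lemma phi_surjective (hinv : Function.Involutive G) (hne : ∀ l, (G l).1 ≠ l.1)
    (hconn : ∀ i j : Fin (r+2), Relation.ReflTransGen (Rel G) i j) :
    ∃ d : Data r, phi d = G := by
  classical
  -- the minimal period of the walk
  obtain ⟨p, hp0, hup, hmin⟩ : ∃ p : ℕ, 0 < p ∧ uu hinv p = uu hinv 0 ∧
      ∀ t : ℕ, 0 < t → t < p → uu hinv t ≠ uu hinv 0 := by
    refine ⟨Nat.find (period_exists hinv), (Nat.find_spec (period_exists hinv)).1,
      (Nat.find_spec (period_exists hinv)).2, ?_⟩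
    intro t ht0 htlt hteq
    exact Nat.find_min (period_exists hinv) htlt ⟨ht0, hteq⟩
  have hfix : (sigmaP hinv ^ (p:ℤ)) ((0:Fin (r+2)), (1:Fin 2)) = ((0:Fin (r+2)), (1:Fin 2)) := by
    have h := hup
    rw [uu_zero] at h
    rw [uu] at h
    exact h
  have hmod : ∀ k : ℤ, uu hinv k = uu hinv (k % p) := by
    intro k
    conv_lhs => rw [← Int.emod_add_mul_ediv k p]
    rw [uu_add]
    have h1 : uu hinv ((p:ℤ) * (k / p)) = uu hinv 0 := by
      rw [uu, uu_zero, zpow_mul]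
      exact Equiv.Perm.zpow_apply_eq_self_of_apply_eq_self hfix (k / (p:ℤ))
    rw [h1, uu_zero, uu]
  have hper : ∀ k : ℤ, uu hinv (k + p) = uu hinv k := by
    intro k
    rw [hmod (k + p), hmod k, show k + (p:ℤ) = k + (p:ℤ) * 1 by ring,
      Int.add_mul_emod_self_left]
  have hinj : ∀ a b : ℤ, 0 ≤ a → a < p → 0 ≤ b → b < p → uu hinv a = uu hinv b → a = b := by
    have key : ∀ a b : ℤ, 0 ≤ a → a ≤ b → b < p → uu hinv a = uu hinv b → a = b := by
      intro a b ha hab hb hu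
      by_contra hne'
      have h1 : uu hinv (b - a) = uu hinv 0 := by
        have : (sigmaP hinv ^ (-a)) (uu hinv a) = (sigmaP hinv ^ (-a)) (uu hinv b) := by rw [hu]
        rw [← uu_add, ← uu_add, neg_add_cancel] at this
        rw [show b - a = -a + b by ring]
        exact this.symm
      set t := (b - a).toNat with ht
      have htlt : t < p := by omega
      have ht0 : 0 < t := by omega
      apply hmin t ht0 htlt
      have hcast : ((t:ℕ) : ℤ) = b - a := by omega
      rw [hcast, h1]
    intro a b ha hap hb hbp hu
    rcases le_total a b with h | h
    · exact key a b ha h hbp hu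
    · exact (key b a hb h hap hu.symm).symm
  -- the walk visits every vertex exactly once, so p = r + 2
  have hgbij : Function.Bijective (fun k : Fin p => (uu hinv (k.val : ℤ)).1) := by
    constructor
    · intro k k' hkk
      have h1 := P2 hinv hne _ _ hkk
      have h2 := hinj _ _ (by omega) (by exact_mod_cast k.isLt) (by omega)
        (by exact_mod_cast k'.isLt) h1
      exact Fin.ext (by omega)
    · intro v
      obtain ⟨t, htv⟩ := cover hinv hne hconn v
      have hb1 : 0 ≤ t % p := Int.emod_nonneg t (by omega)
      have hb2 : t % p < p := Int.emod_lt_of_pos t (by omega)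
      refine ⟨⟨(t % p).toNat, by omega⟩, ?_⟩
      simp only
      rw [show (((t % p).toNat : ℤ)) = t % p by omega, ← hmod, htv]
  have hp2 : (p : ℤ) = (r : ℤ) + 2 := by
    have := Fintype.card_of_bijective hgbij
    simp only [Fintype.card_fin] at this
    omega
  -- construct the encoding data
  have hnz : ∀ k : Fin (r+1), (uu hinv ((k.val:ℤ)+1)).1 ≠ 0 := by
    intro k hk
    have h0 : (uu hinv ((k.val:ℤ)+1)).1 = (uu hinv 0).1 := by rw [uu_zero, hk]
    have h1 := P2 hinv hne _ _ h0
    have hklt : (k.val : ℤ) < r + 1 := by exact_mod_cast k.isLt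
    have := hinj _ _ (by omega) (by omega) (by omega) (by omega) h1
    omega
  set w : Fin (r+1) → {v : Fin (r+2) // v ≠ 0} :=
    fun k => ⟨(uu hinv ((k.val:ℤ)+1)).1, hnz k⟩ with hwdef
  have hwbij : Function.Bijective w := by
    constructor
    · intro k k' hkk
      have h0 : (uu hinv ((k.val:ℤ)+1)).1 = (uu hinv ((k'.val:ℤ)+1)).1 :=
        congrArg Subtype.val hkk
      have h1 := P2 hinv hne _ _ h0
      have hklt : (k.val : ℤ) < r + 1 := by exact_mod_cast k.isLt
      have hklt' : (k'.val : ℤ) < r + 1 := by exact_mod_cast k'.isLt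
      have := hinj _ _ (by omega) (by omega) (by omega) (by omega) h1
      exact Fin.ext (by omega)
    · rintro ⟨v, hv⟩
      obtain ⟨t, htv⟩ := cover hinv hne hconn v
      have hb1 : 0 ≤ t % p := Int.emod_nonneg t (by omega)
      have hb2 : t % p < p := Int.emod_lt_of_pos t (by omega)
      have hne0 : t % p ≠ 0 := by
        intro h0
        apply hv
        rw [← htv, hmod, h0, uu_zero]
      refine ⟨⟨(t % p).toNat - 1, by omega⟩, ?_⟩
      apply Subtype.ext
      simp only [hwdef]
      rw [show ((((t % p).toNat - 1 : ℕ) : ℤ) + 1) = t % p by omega, ← hmod, htv]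
  set d : Data r := (Equiv.ofBijective w hwbij, fun k => (uu hinv ((k.val:ℤ)+1)).2) with hddef
  have hin : ∀ k : Fin (r+1), inleg d k = uu hinv ((k.val:ℤ)+1) := fun k => rfl
  have hout : ∀ k : Fin (r+1), outleg d k = sleg r (uu hinv ((k.val:ℤ)+1)) := fun k => rfl
  refine ⟨d, ?_⟩
  funext l
  rcases leg_cases d l with h | h | ⟨k, h⟩ | ⟨k, h⟩ <;> subst h
  · -- l = (0,0) = sleg (uu 0)
    have h0 : ((0:Fin (r+2)), (0:Fin 2)) = sleg r (uu hinv 0) := by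
      rw [uu_zero, sleg_apply]
      refine Prod.ext rfl ?_
      show (0 : Fin 2) = flip2 1
      decide
    rw [phi_zero0, hin]
    conv_rhs => rw [h0]
    rw [G_suu hinv 0]
    congr 1
  · -- l = (0,1) = uu 0
    have h0 : ((0:Fin (r+2)), (1:Fin 2)) = uu hinv 0 := uu_zero hinv |>.symm
    rw [phi_zero1, hout]
    conv_rhs => rw [h0]
    rw [G_uu hinv 0]
    have h1 : uu hinv ((0:ℤ) - 1) = uu hinv (((Fin.last r).val : ℤ) + 1) := by
      rw [← hper ((0:ℤ) - 1)]
      congr 1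
      rw [Fin.val_last]
      omega
    rw [h1]
  · -- l = inleg d k = uu (k+1)
    rw [phi_inleg, hin, G_uu hinv _]
    by_cases hk : k = 0
    · rw [if_pos hk, hk]
      have h0 : (((0:Fin (r+1)).val : ℤ) + 1) - 1 = 0 := by norm_num
      rw [h0, uu_zero, sleg_apply]
      rfl
    · rw [if_neg hk, hout]
      congr 2
      rw [sub_one_val hk]
      have hk0 : k.val ≠ 0 := fun c => hk (Fin.ext c)
      omega
  · -- l = outleg d k = sleg (uu (k+1))
    rw [phi_outleg, hout, G_suu hinv _]
    by_cases hk : k = Fin.last r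
    · rw [if_pos hk, hk]
      have h0 : (((Fin.last r).val : ℤ) + 1) + 1 = 0 + p := by
        rw [Fin.val_last]; omega
      rw [h0, hper, uu_zero]
    · rw [if_neg hk, hin]
      congr 2
      rw [add_one_val hk]
      omega


/-- the encoding is bijective -/
lemma phi_bijective {r : ℕ} :
    Function.Bijective (fun d : Data r =>
      (⟨phi d, phi_involutive d, phi_ne d, phi_conn d⟩ : ConnSet (Fin (r+2)))) := by
  constructor
  · intro d d' h
    exact phi_injective (congrArg Subtype.val h)
  · rintro ⟨G, hinv, hne, hconn⟩
    obtain ⟨d, hd⟩ := phi_surjective hinv hne hconn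
    exact ⟨d, Subtype.ext hd⟩

lemma card_connSet_fin (r : ℕ) :
    Nat.card (ConnSet (Fin (r+2))) = 2 ^ (r+1) * Nat.factorial (r+1) := by
  refine (Nat.card_eq_of_bijective _ (phi_bijective (r := r))).symm.trans ?_
  have hcardS : Fintype.card {v : Fin (r+2) // v ≠ 0} = r + 1 := by
    rw [Fintype.card_subtype_compl, Fintype.card_subtype_eq, Fintype.card_fin]
    omega
  have e : Fin (r+1) ≃ {v : Fin (r+2) // v ≠ 0} :=
    (Fintype.equivFinOfCardEq hcardS).symm
  rw [Data, Nat.card_prod, Nat.card_eq_fintype_card, Nat.card_eq_fintype_card,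
    Fintype.card_equiv e, Fintype.card_fin, Fintype.card_fun, Fintype.card_fin,
    Fintype.card_fin]
  ring

end Surj

/-! ### Transport along an equivalence of vertex types -/

section Transport

variable {V W : Type*}

/-- transport a matching along an equivalence -/
def mapG (e : V ≃ W) (G : V × Fin 2 → V × Fin 2) : W × Fin 2 → W × Fin 2 :=
  fun l => (e (G (e.symm l.1, l.2)).1, (G (e.symm l.1, l.2)).2)

lemma mapG_mapG (e : V ≃ W) (G : V × Fin 2 → V × Fin 2) :
    mapG e.symm (mapG e G) = G := by
  funext l
  obtain ⟨v, j⟩ := l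
  simp only [mapG, Equiv.symm_apply_apply, Equiv.symm_symm, Equiv.apply_symm_apply]

lemma mapG_involutive (e : V ≃ W) {G : V × Fin 2 → V × Fin 2}
    (h : Function.Involutive G) : Function.Involutive (mapG e G) := by
  intro l
  obtain ⟨v, j⟩ := l
  simp only [mapG, Equiv.symm_apply_apply, Prod.mk.eta]
  rw [h (e.symm v, j)]
  simp

lemma mapG_ne (e : V ≃ W) {G : V × Fin 2 → V × Fin 2}
    (h : ∀ l, (G l).1 ≠ l.1) : ∀ l, ((mapG e G) l).1 ≠ l.1 := by
  rintro ⟨v, j⟩ hc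
  simp only [mapG] at hc
  apply h (e.symm v, j)
  show (G (e.symm v, j)).1 = e.symm v
  conv_rhs => rw [← hc]
  rw [Equiv.symm_apply_apply]

lemma mapG_rel (e : V ≃ W) (G : V × Fin 2 → V × Fin 2) {a b : V} (h : Rel G a b) :
    Rel (mapG e G) (e a) (e b) := by
  obtain ⟨p, q, hpq⟩ := h
  refine ⟨p, q, ?_⟩
  simp only [mapG, Equiv.symm_apply_apply, hpq]

lemma mapG_conn (e : V ≃ W) {G : V × Fin 2 → V × Fin 2}
    (h : ∀ i j : V, Relation.ReflTransGen (Rel G) i j) :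
    ∀ i j : W, Relation.ReflTransGen (Rel (mapG e G)) i j := by
  intro i j
  have := Relation.ReflTransGen.lift e (fun a b hab => mapG_rel e G hab) _ _
    (h (e.symm i) (e.symm j))
  simpa [Function.onFun] using this

/-- transport of connected structures -/
def mapConn (e : V ≃ W) (x : ConnSet V) : ConnSet W :=
  ⟨mapG e x.1, mapG_involutive e x.2.1, mapG_ne e x.2.2.1, mapG_conn e x.2.2.2⟩

/-- equivalence of connected structures -/
def connEquiv (e : V ≃ W) : ConnSet V ≃ ConnSet W where
  toFun := mapConn e
  invFun := mapConn e.symm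
  left_inv x := Subtype.ext (mapG_mapG e x.1)
  right_inv x := Subtype.ext (by
    have := mapG_mapG e.symm x.1
    rwa [Equiv.symm_symm] at this)

lemma card_connSet {V : Type*} [Fintype V] (m : ℕ) (h : Fintype.card V = m + 2) :
    Nat.card (ConnSet V) = 2 ^ (m+1) * Nat.factorial (m+1) := by
  have e : V ≃ Fin (m+2) := Fintype.equivFinOfCardEq h
  rw [Nat.card_congr (connEquiv e), card_connSet_fin]

end Transport

/-! ### Gluing over a partition -/

section Glue

variable {n : ℕ} (π : Finpartition (Finset.univ : Finset (Fin n)))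

/-- global matchings with component structure `π` -/
def GlobalSet : Type :=
  {G : (Fin n × Fin 2) → (Fin n × Fin 2) //
    Function.Involutive G ∧ (∀ l, (G l).1 ≠ l.1) ∧
    (∀ i j : Fin n,
      Relation.ReflTransGen (Rel G) i j ↔ ∃ B ∈ π.parts, i ∈ B ∧ j ∈ B)}

variable {π}

lemma step_mem (x : GlobalSet π) {B : Finset (Fin n)} (hB : B ∈ π.parts)
    {a b : Fin n} (ha : a ∈ B) (hrel : Rel x.1 a b) : b ∈ B := by
  obtain ⟨B', hB', haB', hbB'⟩ := (x.2.2.2 a b).mp (Relation.ReflTransGen.single hrel)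
  rwa [π.eq_of_mem_parts hB' hB haB' ha] at hbB'

lemma path_mem (x : GlobalSet π) {B : Finset (Fin n)} (hB : B ∈ π.parts)
    {a b : Fin n} (h : Relation.ReflTransGen (Rel x.1) a b) (ha : a ∈ B) : b ∈ B := by
  induction h with
  | refl => exact ha
  | tail _ hrel ih => exact step_mem x hB ih hrel

lemma out_mem (x : GlobalSet π) {B : Finset (Fin n)} (hB : B ∈ π.parts)
    {a : Fin n} (ha : a ∈ B) (p : Fin 2) : (x.1 (a, p)).1 ∈ B :=
  step_mem x hB ha ⟨p, (x.1 (a, p)).2, rfl⟩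

/-- restriction of a global matching to a block -/
def restr (x : GlobalSet π) {B : Finset (Fin n)} (hB : B ∈ π.parts) :
    ↥B × Fin 2 → ↥B × Fin 2 :=
  fun l => (⟨(x.1 (l.1.1, l.2)).1, out_mem x hB l.1.2 l.2⟩, (x.1 (l.1.1, l.2)).2)

lemma restr_involutive (x : GlobalSet π) {B : Finset (Fin n)} (hB : B ∈ π.parts) :
    Function.Involutive (restr x hB) := by
  rintro ⟨⟨a, ha⟩, p⟩
  have h := x.2.1 (a, p)
  refine Prod.ext (Subtype.ext ?_) ?_
  · show (x.1 ((x.1 (a, p)).1, (x.1 (a, p)).2)).1 = a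
    rw [Prod.mk.eta, h]
  · show (x.1 ((x.1 (a, p)).1, (x.1 (a, p)).2)).2 = p
    rw [Prod.mk.eta, h]

lemma restr_ne (x : GlobalSet π) {B : Finset (Fin n)} (hB : B ∈ π.parts) :
    ∀ l, ((restr x hB) l).1 ≠ l.1 := by
  rintro ⟨⟨a, ha⟩, p⟩ hc
  exact x.2.2.1 (a, p) (congrArg Subtype.val hc)

lemma restr_path (x : GlobalSet π) {B : Finset (Fin n)} (hB : B ∈ π.parts)
    {a b : Fin n} (h : Relation.ReflTransGen (Rel x.1) a b) :
    ∀ (ha : a ∈ B) (hb : b ∈ B),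
      Relation.ReflTransGen (Rel (restr x hB)) ⟨a, ha⟩ ⟨b, hb⟩ := by
  induction h with
  | refl => intro ha hb; exact Relation.ReflTransGen.refl
  | @tail b c hab hrel ih =>
    intro ha hc
    have hb : b ∈ B := path_mem x hB hab ha
    refine (ih ha hb).tail ?_
    obtain ⟨p, q, hpq⟩ := hrel
    refine ⟨p, q, Prod.ext (Subtype.ext ?_) ?_⟩
    · show (x.1 (b, p)).1 = c
      rw [hpq]
    · show (x.1 (b, p)).2 = q
      rw [hpq]

lemma restr_conn (x : GlobalSet π) {B : Finset (Fin n)} (hB : B ∈ π.parts)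
    (i j : ↥B) : Relation.ReflTransGen (Rel (restr x hB)) i j := by
  obtain ⟨i, hi⟩ := i
  obtain ⟨j, hj⟩ := j
  exact restr_path x hB ((x.2.2.2 i j).mpr ⟨B, hB, hi, hj⟩) hi hj

/-- gluing a family of connected matchings on the blocks -/
def glue (F : ∀ B : {x // x ∈ π.parts}, ConnSet ↥(B.1)) :
    Fin n × Fin 2 → Fin n × Fin 2 := fun l =>
  ((((F ⟨π.part l.1, π.part_mem.2 (mem_univ l.1)⟩).1
      (⟨l.1, π.mem_part (mem_univ l.1)⟩, l.2)).1 : Fin n),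
   ((F ⟨π.part l.1, π.part_mem.2 (mem_univ l.1)⟩).1
      (⟨l.1, π.mem_part (mem_univ l.1)⟩, l.2)).2)

lemma glue_eq (F : ∀ B : {x // x ∈ π.parts}, ConnSet ↥(B.1))
    (B : {x // x ∈ π.parts}) (a : Fin n) (ha : a ∈ B.1) (p : Fin 2) :
    glue F (a, p) =
      ((((F B).1 (⟨a, ha⟩, p)).1 : Fin n), ((F B).1 (⟨a, ha⟩, p)).2) := by
  have hBa : (⟨π.part a, π.part_mem.2 (mem_univ a)⟩ : {x // x ∈ π.parts}) = B :=
    Subtype.ext (π.part_eq_of_mem B.2 ha)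
  cases hBa
  rfl

lemma glue_involutive (F : ∀ B : {x // x ∈ π.parts}, ConnSet ↥(B.1)) :
    Function.Involutive (glue F) := by
  rintro ⟨a, p⟩
  have hBmem : π.part a ∈ π.parts := π.part_mem.2 (mem_univ a)
  have ha : a ∈ π.part a := π.mem_part (mem_univ a)
  rw [glue_eq F ⟨π.part a, hBmem⟩ a ha p]
  set y := (F ⟨π.part a, hBmem⟩).1 (⟨a, ha⟩, p) with hydef
  rw [glue_eq F ⟨π.part a, hBmem⟩ (y.1 : Fin n) y.1.2 y.2]
  have h2 : (F ⟨π.part a, hBmem⟩).1 (⟨(y.1 : Fin n), y.1.2⟩, y.2) = (⟨a, ha⟩, p) := by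
    have he : ((⟨(y.1 : Fin n), y.1.2⟩, y.2) : ↥(π.part a) × Fin 2) = y := rfl
    rw [he, hydef]
    exact (F ⟨π.part a, hBmem⟩).2.1 (⟨a, ha⟩, p)
  rw [h2]

lemma glue_ne (F : ∀ B : {x // x ∈ π.parts}, ConnSet ↥(B.1)) :
    ∀ l, ((glue F) l).1 ≠ l.1 := by
  rintro ⟨a, p⟩ hc
  have hBmem : π.part a ∈ π.parts := π.part_mem.2 (mem_univ a)
  have ha : a ∈ π.part a := π.mem_part (mem_univ a)
  rw [glue_eq F ⟨π.part a, hBmem⟩ a ha p] at hc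
  exact (F ⟨π.part a, hBmem⟩).2.2.1 (⟨a, ha⟩, p) (Subtype.ext hc)

lemma glue_rel (F : ∀ B : {x // x ∈ π.parts}, ConnSet ↥(B.1))
    (B : {x // x ∈ π.parts}) {x y : ↥(B.1)} (h : Rel (F B).1 x y) :
    Rel (glue F) (x : Fin n) (y : Fin n) := by
  obtain ⟨p, q, hpq⟩ := h
  refine ⟨p, q, ?_⟩
  rw [glue_eq F B (x : Fin n) x.2 p]
  have he : ((⟨(x : Fin n), x.2⟩, p) : ↥(B.1) × Fin 2) = (x, p) := rfl
  rw [he, hpq]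

lemma glue_conn (F : ∀ B : {x // x ∈ π.parts}, ConnSet ↥(B.1)) (i j : Fin n) :
    Relation.ReflTransGen (Rel (glue F)) i j ↔ ∃ B ∈ π.parts, i ∈ B ∧ j ∈ B := by
  constructor
  · intro h
    have hp : π.part i = π.part j := by
      induction h with
      | refl => rfl
      | @tail b c hab hrel ih =>
        obtain ⟨p, q, hpq⟩ := hrel
        rw [glue_eq F ⟨π.part b, π.part_mem.2 (mem_univ b)⟩ b (π.mem_part (mem_univ b)) p]
          at hpq
        have hc : c ∈ π.part b := by
          have h1 := congrArg Prod.fst hpq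
          simp only at h1
          rw [← h1]
          exact (((F ⟨π.part b, π.part_mem.2 (mem_univ b)⟩).1
            (⟨b, π.mem_part (mem_univ b)⟩, p)).1).2
        rw [ih, ← π.part_eq_of_mem (π.part_mem.2 (mem_univ b)) hc]
    exact ⟨π.part i, π.part_mem.2 (mem_univ i), π.mem_part (mem_univ i),
      by rw [hp]; exact π.mem_part (mem_univ j)⟩
  · rintro ⟨B, hB, hi, hj⟩
    have hpath := (F ⟨B, hB⟩).2.2.2 ⟨i, hi⟩ ⟨j, hj⟩
    have := Relation.ReflTransGen.lift (fun z : ↥B => (z : Fin n))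
      (fun x y hxy => glue_rel F ⟨B, hB⟩ hxy) _ _ hpath
    exact this

/-- the decomposition of the set of global matchings -/
def globalEquiv : GlobalSet π ≃ ∀ B : {x // x ∈ π.parts}, ConnSet ↥(B.1) where
  toFun x B := ⟨restr x B.2, restr_involutive x B.2, restr_ne x B.2, restr_conn x B.2⟩
  invFun F := ⟨glue F, glue_involutive F, glue_ne F, glue_conn F⟩
  left_inv x := by
    apply Subtype.ext
    funext l
    obtain ⟨a, p⟩ := l
    show glue (fun B => ⟨restr x B.2, restr_involutive x B.2, restr_ne x B.2,
      restr_conn x B.2⟩) (a, p) = x.1 (a, p)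
    refine (glue_eq _ ⟨π.part a, π.part_mem.2 (mem_univ a)⟩ a (π.mem_part (mem_univ a)) p).trans ?_
    rfl
  right_inv F := by
    funext B
    apply Subtype.ext
    funext l
    obtain ⟨⟨a, ha⟩, p⟩ := l
    have h := glue_eq F B a ha p
    refine Prod.ext (Subtype.ext ?_) ?_
    · show (glue F (a, p)).1 = (((F B).1 (⟨a, ha⟩, p)).1 : Fin n)
      rw [h]
    · show (glue F (a, p)).2 = ((F B).1 (⟨a, ha⟩, p)).2
      rw [h]

lemma card_global (hπ : ∀ B ∈ π.parts, 2 ≤ B.card) :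
    Nat.card (GlobalSet π) =
      ∏ B ∈ π.parts, 2 ^ (B.card - 1) * Nat.factorial (B.card - 1) := by
  rw [Nat.card_congr (globalEquiv (π := π)), Nat.card_pi,
    ← Finset.prod_coe_sort π.parts (fun B => 2 ^ (B.card - 1) * Nat.factorial (B.card - 1))]
  refine Finset.prod_congr rfl ?_
  intro B _
  have h2 : 2 ≤ B.1.card := hπ B.1 B.2
  obtain ⟨m, hm⟩ : ∃ m, B.1.card = m + 2 := ⟨B.1.card - 2, by omega⟩
  have hcard : Fintype.card ↥(B.1) = m + 2 := by rw [Fintype.card_coe]; exact hm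
  rw [card_connSet m hcard, hm]
  norm_num

end Glue
end Stmt12Aux

/-- the number of Feynman graphs in `𝒢ₙ²` (perfect matchings of the `2n`
legs `(i,j)`, `i ∈ Fin n`, `j ∈ Fin 2`, joining legs of distinct vertices) whose
connected components on the vertex set are exactly the blocks of a given partition `π`
(all blocks of size `≥ 2`) equals `∏_{B ∈ π} 2^{#B−1}(#B−1)!`. -/
theorem stmt12 (n : ℕ) (hn : 2 ≤ n)
    (π : Finpartition (Finset.univ : Finset (Fin n)))
    (hπ : ∀ B ∈ π.parts, 2 ≤ B.card) :
    Nat.card {G : (Fin n × Fin 2) → (Fin n × Fin 2) //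
        Function.Involutive G ∧ (∀ l, (G l).1 ≠ l.1) ∧
        (∀ i j : Fin n,
          Relation.ReflTransGen (fun a b : Fin n => ∃ p q : Fin 2, G (a, p) = (b, q)) i j
            ↔ ∃ B ∈ π.parts, i ∈ B ∧ j ∈ B)}
      = ∏ B ∈ π.parts, 2 ^ (B.card - 1) * Nat.factorial (B.card - 1) := by
  show Nat.card (Stmt12Aux.GlobalSet π) = _
  exact Stmt12Aux.card_global hπ
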